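/- Let T_l be a nonsingular l×l matrix over GF(2) and let T_L = T₂⊗T_l = [[T_l,0],[T_l,T_l]]. Then for every 0 ≤ i ≤ l−1 the following identities of polynomials (say in ℤ[z]) hold between the erasure polynomials of T_L and of T_l: p_i^{T_L}(z) = p_i^{T_l}(2z − z²) and p_{l+i}^{T_L}(z) = p_i^{T_l}(z²). -/

import Mathlib

open Matrix

/-- Kronecker product of square matrices over GF(2), with row/column index
pairs ordered lexicographically: `(a, b)` corresponds to index `a * n + b`. -/
noncomputable def kron {m n : ℕ} (A : Matrix (Fin m) (Fin m) (ZMod 2))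
    (B : Matrix (Fin n) (Fin n) (ZMod 2)) :
    Matrix (Fin (m * n)) (Fin (m * n)) (ZMod 2) :=
  Matrix.reindex finProdFinEquiv finProdFinEquiv (Matrix.kroneckerMap (· * ·) A B)

/-- The matrix `T₂ = [[1,0],[1,1]]` over GF(2). -/
def Ttwo : Matrix (Fin 2) (Fin 2) (ZMod 2) := !![1, 0; 1, 1]

/-- An erasure pattern `e : Fin l → Bool` (where `e j = true` means the `j`-th
copy of the channel is erased) kills bit channel `i` of the kernel `T` if the
vector `Y_{l-i} = (1,0,…,0)ᵀ` of length `l - i` (indexed by rows `r` with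
`i ≤ r`) is not in the `𝔽₂`-linear span of the columns of the submatrix
`T[i : l-1]` at the non-erased positions. -/
def Kills {l : ℕ} (T : Matrix (Fin l) (Fin l) (ZMod 2)) (i : Fin l)
    (e : Fin l → Bool) : Prop :=
  (fun r : {r : Fin l // i ≤ r} => if r.val = i then (1 : ZMod 2) else 0) ∉
    Submodule.span (ZMod 2)
      {w : {r : Fin l // i ≤ r} → ZMod 2 | ∃ j : Fin l, e j = false ∧ w = fun r => T r.val j}

/-- `E_{i,w}(T)`: the number of erasure patterns of weight `w` (i.e. with
exactly `w` erased positions) that kill bit channel `i` of `T`. -/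
noncomputable def numKilling {l : ℕ} (T : Matrix (Fin l) (Fin l) (ZMod 2))
    (i : Fin l) (w : ℕ) : ℕ :=
  Nat.card {e : Fin l → Bool //
    (Finset.univ.filter fun j => e j = true).card = w ∧ Kills T i e}

/-- The erasure polynomial `p_i^T(z) = Σ_w E_{i,w}(T) z^w (1-z)^{l-w} ∈ ℤ[z]`
of bit channel `i` of `T`. -/
noncomputable def erasurePoly {l : ℕ} (T : Matrix (Fin l) (Fin l) (ZMod 2))
    (i : Fin l) : Polynomial ℤ :=
  ∑ w ∈ Finset.range (l + 1),
    (numKilling T i w : Polynomial ℤ) * Polynomial.X ^ w * (1 - Polynomial.X) ^ (l - w)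

/-! ### Auxiliary machinery -/

open Finset Polynomial

section SpanChar
variable {n : ℕ} {V : Type*} [AddCommGroup V] [Module (ZMod 2) V]

omit [AddCommGroup V] [Module (ZMod 2) V] in
lemma span_cols_eq_range (e : Fin n → Bool) (v : Fin n → V) :
    {w : V | ∃ j : Fin n, e j = false ∧ w = v j} =
      Set.range (fun j : {j : Fin n // e j = false} => v j.val) := by
  ext w
  constructor
  · rintro ⟨j, hj, rfl⟩; exact ⟨⟨j, hj⟩, rfl⟩
  · rintro ⟨⟨j, hj⟩, rfl⟩; exact ⟨j, hj, rfl⟩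

lemma sum_smul_subtype (e : Fin n → Bool) (v : Fin n → V) (c : Fin n → ZMod 2)
    (hc : ∀ j, e j = true → c j = 0) :
    ∑ j, c j • v j = ∑ j : {j : Fin n // e j = false}, c j.val • v j.val := by
  classical
  rw [← Finset.sum_filter_of_ne (p := fun j => e j = false)
    (fun x _ hx => by
      by_contra h
      exact hx (by rw [hc x (by simpa using h)]; simp))]
  exact Finset.sum_subtype _ (fun x => by simp) _

lemma mem_span_cols_iff (e : Fin n → Bool) (v : Fin n → V) (x : V) :
    x ∈ Submodule.span (ZMod 2) {w : V | ∃ j : Fin n, e j = false ∧ w = v j} ↔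
      ∃ c : Fin n → ZMod 2, (∀ j, e j = true → c j = 0) ∧ ∑ j, c j • v j = x := by
  classical
  rw [span_cols_eq_range, Submodule.mem_span_range_iff_exists_fun]
  constructor
  · rintro ⟨c₀, hc₀⟩
    refine ⟨fun j => if h : e j = false then c₀ ⟨j, h⟩ else 0,
      fun j hj => by simp [hj], ?_⟩
    rw [sum_smul_subtype e v _ (fun j hj => by simp [hj]), ← hc₀]
    exact Finset.sum_congr rfl fun j _ => by rw [dif_pos j.prop]
  · rintro ⟨c, hc, hsum⟩
    exact ⟨fun j => c j.val, by rw [← hsum, sum_smul_subtype e v c hc]⟩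

end SpanChar

lemma kills_iff {l : ℕ} (T : Matrix (Fin l) (Fin l) (ZMod 2)) (i : Fin l)
    (e : Fin l → Bool) :
    Kills T i e ↔ ¬ ∃ c : Fin l → ZMod 2, (∀ j, e j = true → c j = 0) ∧
      ∀ r : {r : Fin l // i ≤ r}, ∑ j, c j * T r.val j =
        (if r.val = i then (1 : ZMod 2) else 0) := by
  rw [Kills, mem_span_cols_iff]
  apply not_congr
  apply exists_congr; intro c
  apply and_congr_right'
  rw [funext_iff]
  apply forall_congr'; intro r
  simp [Finset.sum_apply]

section Indexing
variable {l : ℕ}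

/-- The first copy of `Fin l` inside `Fin (2 * l)`. -/
def inl (d : Fin l) : Fin (2 * l) := ⟨d, by have := d.isLt; linarith⟩

/-- The second copy of `Fin l` inside `Fin (2 * l)`. -/
def inr (d : Fin l) : Fin (2 * l) := ⟨l + d, by have := d.isLt; linarith⟩

/-- Fold an index of `Fin (2 * l)` onto `Fin l`. -/
def toD (j : Fin (2 * l)) : Fin l :=
  if h : (j : ℕ) < l then ⟨(j : ℕ), h⟩ else ⟨(j : ℕ) - l, by have := j.isLt; omega⟩

lemma toD_inl (d : Fin l) : toD (inl d) = d := by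
  have h : ((inl d : Fin (2 * l)) : ℕ) < l := d.isLt
  rw [toD, dif_pos h]
  exact Fin.ext rfl

lemma toD_inr (d : Fin l) : toD (inr d) = d := by
  have h : ¬ ((inr d : Fin (2 * l)) : ℕ) < l := by simp [inr]
  rw [toD, dif_neg h]
  exact Fin.ext (by simp [inr])

lemma finProd_zero (d : Fin l) : finProdFinEquiv ((0 : Fin 2), d) = inl d := by
  apply Fin.ext; simp [inl]

lemma finProd_one (d : Fin l) : finProdFinEquiv ((1 : Fin 2), d) = inr d := by
  apply Fin.ext; simp [inr, Nat.add_comm]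

lemma fin2l_cases (j : Fin (2 * l)) : (∃ d, j = inl d) ∨ (∃ d, j = inr d) := by
  have := j.isLt
  rcases lt_or_ge j.val l with h | h
  · exact Or.inl ⟨⟨j.val, h⟩, Fin.ext rfl⟩
  · exact Or.inr ⟨⟨j.val - l, by omega⟩, Fin.ext (by simp [inr]; omega)⟩

@[to_additive]
lemma prod_split {M : Type*} [CommMonoid M] (f : Fin (2 * l) → M) :
    ∏ j, f j = (∏ d, f (inl d)) * ∏ d, f (inr d) := by
  rw [← Equiv.prod_comp finProdFinEquiv f, Fintype.prod_prod_type, Fin.prod_univ_two]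
  simp only [finProd_zero, finProd_one]

lemma kron_entry {A : Matrix (Fin 2) (Fin 2) (ZMod 2)} {T : Matrix (Fin l) (Fin l) (ZMod 2)}
    (a c : Fin 2) (b d : Fin l) :
    kron A T (finProdFinEquiv (a, b)) (finProdFinEquiv (c, d)) = A a c * T b d := by
  simp [kron, Matrix.kroneckerMap]

lemma kronT_ll {T : Matrix (Fin l) (Fin l) (ZMod 2)} (b d : Fin l) :
    kron Ttwo T (inl b) (inl d) = T b d := by
  rw [← finProd_zero, ← finProd_zero, kron_entry]; simp [Ttwo]

lemma kronT_lr {T : Matrix (Fin l) (Fin l) (ZMod 2)} (b d : Fin l) :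
    kron Ttwo T (inl b) (inr d) = 0 := by
  rw [← finProd_zero, ← finProd_one, kron_entry]; simp [Ttwo]

lemma kronT_rl {T : Matrix (Fin l) (Fin l) (ZMod 2)} (b d : Fin l) :
    kron Ttwo T (inr b) (inl d) = T b d := by
  rw [← finProd_one, ← finProd_zero, kron_entry]; simp [Ttwo]

lemma kronT_rr {T : Matrix (Fin l) (Fin l) (ZMod 2)} (b d : Fin l) :
    kron Ttwo T (inr b) (inr d) = T b d := by
  rw [← finProd_one, ← finProd_one, kron_entry]; simp [Ttwo]

lemma le_inr {i : Fin l} {b : Fin l} (h : i ≤ b) {hh : l + (i : ℕ) < 2 * l} :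
    (⟨l + (i : ℕ), hh⟩ : Fin (2 * l)) ≤ inr b := by
  rw [Fin.le_def] at h ⊢
  simp only [inr]
  omega

end Indexing

variable {l : ℕ} {T : Matrix (Fin l) (Fin l) (ZMod 2)}

lemma kills_and (i : Fin l) (e : Fin (2 * l) → Bool) :
    Kills (kron Ttwo T) ⟨l + (i : ℕ), by have := i.isLt; linarith⟩ e ↔
      Kills T i (fun d => e (inl d) && e (inr d)) := by
  classical
  rw [kills_iff, kills_iff]
  apply not_congr
  constructor
  · rintro ⟨c, hc, hrow⟩
    refine ⟨fun d => c (inl d) + c (inr d), ?_, ?_⟩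
    · intro d hd
      simp only [Bool.and_eq_true] at hd
      show c (inl d) + c (inr d) = 0
      rw [hc _ hd.1, hc _ hd.2, add_zero]
    · rintro ⟨b, hb⟩
      have := hrow ⟨inr b, le_inr hb⟩
      rw [sum_split] at this
      simp only [kronT_rl, kronT_rr] at this
      rw [← Finset.sum_add_distrib] at this
      simp only [← add_mul] at this
      have hval : (inr b = (⟨l + (i : ℕ), by have := i.isLt; omega⟩ : Fin (2 * l))) ↔ b = i := by
        rw [Fin.ext_iff, Fin.ext_iff]
        simp [inr]
      show ∑ d, (c (inl d) + c (inr d)) * T b d = _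
      rw [this, if_congr hval rfl rfl]
  · rintro ⟨c', hc', hrow⟩
    set c : Fin (2 * l) → ZMod 2 := fun j =>
      if (j : ℕ) < l then (if e (inl (toD j)) = false then c' (toD j) else 0)
      else (if e (inl (toD j)) = false then 0 else c' (toD j)) with hcdef
    have hcl : ∀ d, c (inl d) = if e (inl d) = false then c' d else 0 := by
      intro d
      rw [hcdef]
      simp only [toD_inl]
      rw [if_pos (show ((inl d : Fin (2 * l)) : ℕ) < l from d.isLt)]
    have hcr : ∀ d, c (inr d) = if e (inl d) = false then 0 else c' d := by
      intro d
      rw [hcdef]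
      simp only [toD_inr]
      rw [if_neg (show ¬ ((inr d : Fin (2 * l)) : ℕ) < l by simp [inr])]
    refine ⟨c, ?_, ?_⟩
    · intro j hj
      rcases fin2l_cases j with ⟨d, rfl⟩ | ⟨d, rfl⟩
      · rw [hcl d, if_neg (by simp [hj])]
      · rw [hcr d]
        by_cases h0 : e (inl d) = false
        · rw [if_pos h0]
        · rw [if_neg h0]
          exact hc' d (by simp at h0; simp [h0, hj])
    · rintro ⟨r, hr⟩
      have hrl : l + (i : ℕ) ≤ (r : ℕ) := by rw [Fin.le_def] at hr; simpa using hr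
      have hb : (r : ℕ) - l < l := by have := r.isLt; omega
      have hbr : r = inr ⟨(r : ℕ) - l, hb⟩ := Fin.ext (by simp [inr]; omega)
      have hbi : i ≤ (⟨(r : ℕ) - l, hb⟩ : Fin l) := by
        rw [Fin.le_def]; simp; omega
      have hsum : ∀ d : Fin l, c (inl d) + c (inr d) = c' d := by
        intro d
        rw [hcl d, hcr d]
        by_cases h0 : e (inl d) = false <;> simp [h0]
      have key : ∑ j, c j * kron Ttwo T r j =
          if (⟨(r : ℕ) - l, hb⟩ : Fin l) = i then (1 : ZMod 2) else 0 := by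
        conv_lhs => rw [hbr]
        rw [sum_split]
        simp only [kronT_rl, kronT_rr]
        rw [← Finset.sum_add_distrib]
        simp only [← add_mul, hsum]
        exact hrow ⟨⟨(r : ℕ) - l, hb⟩, hbi⟩
      show ∑ j, c j * kron Ttwo T r j = _
      rw [key]
      refine if_congr ?_ rfl rfl
      rw [Fin.ext_iff, Fin.ext_iff]
      simp only []
      omega

lemma kills_or (hT : IsUnit T) (i : Fin l) (e : Fin (2 * l) → Bool) :
    Kills (kron Ttwo T) ⟨(i : ℕ), by have := i.isLt; linarith⟩ e ↔
      Kills T i (fun d => e (inl d) || e (inr d)) := by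
  classical
  have hil : (i : ℕ) < 2 * l := by have := i.isLt; omega
  rw [kills_iff, kills_iff]
  apply not_congr
  constructor
  · rintro ⟨c, hc, hrow⟩
    have h_top : ∀ b : Fin l, i ≤ b →
        ∑ d, c (inl d) * T b d = (if b = i then (1 : ZMod 2) else 0) := by
      intro b hb
      have hle : (⟨(i : ℕ), hil⟩ : Fin (2 * l)) ≤ inl b := by
        rw [Fin.le_def] at hb ⊢; simpa [inl] using hb
      have := hrow ⟨inl b, hle⟩
      rw [sum_split] at this
      simp only [kronT_ll, kronT_lr, mul_zero, Finset.sum_const_zero, add_zero] at this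
      rw [this]
      refine if_congr ?_ rfl rfl
      rw [Fin.ext_iff, Fin.ext_iff]
      simp [inl]
    have h_bot : ∀ b : Fin l, ∑ d, (c (inl d) + c (inr d)) * T b d = 0 := by
      intro b
      have hle : (⟨(i : ℕ), hil⟩ : Fin (2 * l)) ≤ inr b := by
        rw [Fin.le_def]; simp only [inr]; omega
      have := hrow ⟨inr b, hle⟩
      rw [sum_split] at this
      simp only [kronT_rl, kronT_rr] at this
      rw [← Finset.sum_add_distrib] at this
      simp only [← add_mul] at this
      rw [if_neg (by rw [Fin.ext_iff]; simp only [inr]; have := i.isLt; omega)] at this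
      exact this
    have hmulvec : T.mulVec (fun d => c (inl d) + c (inr d)) = 0 := by
      funext b
      show ∑ d, T b d * (c (inl d) + c (inr d)) = 0
      rw [← h_bot b]
      exact Finset.sum_congr rfl fun d _ => mul_comm _ _
    have halpha : ∀ d, c (inl d) + c (inr d) = 0 := by
      have hdet : IsUnit T.det := (Matrix.isUnit_iff_isUnit_det T).mp hT
      have : (fun d => c (inl d) + c (inr d)) = 0 := by
        calc (fun d => c (inl d) + c (inr d))
            = (1 : Matrix (Fin l) (Fin l) (ZMod 2)).mulVec
                (fun d => c (inl d) + c (inr d)) := by rw [Matrix.one_mulVec]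
          _ = (T⁻¹ * T).mulVec (fun d => c (inl d) + c (inr d)) := by
              rw [Matrix.nonsing_inv_mul T hdet]
          _ = T⁻¹.mulVec (T.mulVec (fun d => c (inl d) + c (inr d))) := by
              rw [← Matrix.mulVec_mulVec]
          _ = 0 := by rw [hmulvec, Matrix.mulVec_zero]
      intro d
      exact congrFun this d
    have heq : ∀ d, c (inr d) = c (inl d) := by
      intro d
      have := halpha d
      have h2 : c (inl d) = -c (inr d) := by linear_combination this
      rw [h2, CharTwo.neg_eq]
    refine ⟨fun d => c (inl d), ?_, ?_⟩
    · intro d hd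
      simp only [Bool.or_eq_true] at hd
      show c (inl d) = 0
      rcases hd with hd | hd
      · exact hc _ hd
      · rw [← heq d]; exact hc _ hd
    · rintro ⟨b, hb⟩
      exact h_top b hb
  · rintro ⟨c', hc', hrow⟩
    refine ⟨fun j => c' (toD j), ?_, ?_⟩
    · intro j hj
      rcases fin2l_cases j with ⟨d, rfl⟩ | ⟨d, rfl⟩
      · show c' (toD (inl d)) = 0
        rw [toD_inl]; exact hc' d (by simp [hj])
      · show c' (toD (inr d)) = 0
        rw [toD_inr]; exact hc' d (by simp [hj])
    · rintro ⟨r, hr⟩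
      show ∑ j, c' (toD j) * kron Ttwo T r j =
        if r = (⟨(i : ℕ), hil⟩ : Fin (2 * l)) then (1 : ZMod 2) else 0
      by_cases h : (r : ℕ) < l
      · have hbr : r = inl ⟨(r : ℕ), h⟩ := Fin.ext rfl
        have hbi : i ≤ (⟨(r : ℕ), h⟩ : Fin l) := by
          rw [Fin.le_def] at hr ⊢; simpa using hr
        have key : ∑ j, c' (toD j) * kron Ttwo T r j =
            if (⟨(r : ℕ), h⟩ : Fin l) = i then (1 : ZMod 2) else 0 := by
          conv_lhs => rw [hbr]
          rw [sum_split]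
          simp only [toD_inl, toD_inr, kronT_ll, kronT_lr, mul_zero,
            Finset.sum_const_zero, add_zero]
          exact hrow ⟨⟨(r : ℕ), h⟩, hbi⟩
        rw [key]
        refine (if_congr ?_ rfl rfl).symm
        rw [Fin.ext_iff, Fin.ext_iff]
      · have hb : (r : ℕ) - l < l := by have := r.isLt; omega
        have hbr : r = inr ⟨(r : ℕ) - l, hb⟩ := Fin.ext (by simp [inr]; omega)
        have key : ∑ j, c' (toD j) * kron Ttwo T r j = 0 := by
          conv_lhs => rw [hbr]
          rw [sum_split]
          simp only [toD_inl, toD_inr, kronT_rl, kronT_rr]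
          rw [← Finset.sum_add_distrib]
          simp only [← add_mul, CharTwo.add_self_eq_zero, zero_mul]
          exact Finset.sum_const_zero
        rw [key, if_neg (by rw [Fin.ext_iff]; simp only [Fin.val_mk]; have := i.isLt; omega)]


section Weight
variable {n : ℕ}

def wt (e : Fin n → Bool) : ℕ := (Finset.univ.filter fun j => e j = true).card

lemma wt_le (e : Fin n → Bool) : wt e ≤ n := by
  calc wt e ≤ Finset.univ.card := Finset.card_filter_le _ _
  _ = n := by simp

lemma card_false (e : Fin n → Bool) :
    (Finset.univ.filter fun j => e j = false).card = n - wt e := by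
  have h := Finset.card_filter_add_card_filter_not
    (s := (Finset.univ : Finset (Fin n))) (p := fun j => e j = true)
  have h2 : (Finset.univ.filter fun j => ¬ (fun j => e j = true) j)
      = Finset.univ.filter fun j => e j = false := by
    apply Finset.filter_congr
    intro j _
    simp
  rw [h2] at h
  simp only [Finset.card_univ, Fintype.card_fin] at h
  have hwt : (Finset.univ.filter fun j => e j = true).card = wt e := rfl
  omega

lemma prod_form {M : Type*} [CommMonoid M] (x y : M) (e : Fin n → Bool) :
    ∏ j, (if e j then x else y) = x ^ wt e * y ^ (n - wt e) := by
  rw [Finset.prod_ite]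
  simp only [Finset.prod_const]
  congr 1
  rw [← card_false e]
  congr 1
  apply congrArg
  apply Finset.filter_congr
  intro j _
  simp

lemma count_sum_form (P : (Fin n → Bool) → Prop) [DecidablePred P] (x y : Polynomial ℤ) :
    ∑ w ∈ Finset.range (n + 1),
        (Nat.card {e : Fin n → Bool // wt e = w ∧ P e} : Polynomial ℤ) * x ^ w * y ^ (n - w) =
      ∑ e : Fin n → Bool, if P e then x ^ wt e * y ^ (n - wt e) else 0 := by
  classical
  rw [← Finset.sum_fiberwise_of_maps_to (t := Finset.range (n + 1)) (g := wt)
    (fun e _ => Finset.mem_range.mpr (Nat.lt_succ_of_le (wt_le e)))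
    (fun e => if P e then x ^ wt e * y ^ (n - wt e) else 0)]
  refine Finset.sum_congr rfl fun w _ => ?_
  have h1 : ∀ e ∈ Finset.univ.filter fun e : Fin n → Bool => wt e = w,
      (if P e then x ^ wt e * y ^ (n - wt e) else 0) =
        (if P e then x ^ w * y ^ (n - w) else 0) := by
    intro e he
    rw [Finset.mem_filter] at he
    rw [he.2]
  rw [Finset.sum_congr rfl h1, ← Finset.sum_filter, Finset.filter_filter,
    Finset.sum_const, Nat.card_eq_fintype_card, Fintype.card_subtype, nsmul_eq_mul, mul_assoc]

end Weight

section Core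
variable {l : ℕ}

def splitE : (Fin l → Bool × Bool) ≃ (Fin (2 * l) → Bool) where
  toFun p := fun j => if (j : ℕ) < l then (p (toD j)).1 else (p (toD j)).2
  invFun e := fun d => (e (inl d), e (inr d))
  left_inv p := by
    funext d
    apply Prod.ext
    · show (if ((inl d : Fin (2 * l)) : ℕ) < l then (p (toD (inl d))).1
        else (p (toD (inl d))).2) = (p d).1
      rw [if_pos (show ((inl d : Fin (2 * l)) : ℕ) < l from d.isLt), toD_inl]
    · show (if ((inr d : Fin (2 * l)) : ℕ) < l then (p (toD (inr d))).1
        else (p (toD (inr d))).2) = (p d).2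
      rw [if_neg (by simp [inr]), toD_inr]
  right_inv e := by
    funext j
    rcases fin2l_cases j with ⟨d, rfl⟩ | ⟨d, rfl⟩
    · show (if ((inl d : Fin (2 * l)) : ℕ) < l then _ else _) = _
      rw [if_pos (show ((inl d : Fin (2 * l)) : ℕ) < l from d.isLt), toD_inl]
    · show (if ((inr d : Fin (2 * l)) : ℕ) < l then _ else _) = _
      rw [if_neg (by simp [inr]), toD_inr]

lemma splitE_inl (p : Fin l → Bool × Bool) (d : Fin l) : splitE p (inl d) = (p d).1 := by
  show (if ((inl d : Fin (2 * l)) : ℕ) < l then (p (toD (inl d))).1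
    else (p (toD (inl d))).2) = (p d).1
  rw [if_pos (show ((inl d : Fin (2 * l)) : ℕ) < l from d.isLt), toD_inl]

lemma splitE_inr (p : Fin l → Bool × Bool) (d : Fin l) : splitE p (inr d) = (p d).2 := by
  show (if ((inr d : Fin (2 * l)) : ℕ) < l then (p (toD (inr d))).1
    else (p (toD (inr d))).2) = (p d).2
  rw [if_neg (by simp [inr]), toD_inr]

lemma core_sum (P : (Fin l → Bool) → Prop) [DecidablePred P] (op : Bool → Bool → Bool)
    (f : Bool → Polynomial ℤ) :
    ∑ e : Fin (2 * l) → Bool,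
        (if P (fun d => op (e (inl d)) (e (inr d))) then ∏ j, f (e j) else 0) =
      ∑ e' : Fin l → Bool, (if P e' then
        ∏ d, (∑ q ∈ Finset.univ.filter fun q : Bool × Bool => op q.1 q.2 = e' d,
          f q.1 * f q.2) else 0) := by
  classical
  rw [← Equiv.sum_comp (splitE (l := l))]
  have hterm : ∀ p : Fin l → Bool × Bool,
      (if P (fun d => op (splitE p (inl d)) (splitE p (inr d)))
        then ∏ j, f (splitE p j) else 0)
      = (if P (fun d => op (p d).1 (p d).2) then ∏ d, (f (p d).1 * f (p d).2) else 0) := by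
    intro p
    have h1 : (fun d => op (splitE p (inl d)) (splitE p (inr d)))
        = fun d => op (p d).1 (p d).2 := by
      funext d
      rw [splitE_inl, splitE_inr]
    rw [h1]
    refine if_congr Iff.rfl ?_ rfl
    rw [prod_split]
    simp only [splitE_inl, splitE_inr]
    rw [← Finset.prod_mul_distrib]
  simp only [hterm]
  rw [← Finset.sum_fiberwise_of_maps_to
    (t := (Finset.univ : Finset (Fin l → Bool)))
    (g := fun p : Fin l → Bool × Bool => fun d => op (p d).1 (p d).2)
    (fun p _ => Finset.mem_univ _)]
  refine Finset.sum_congr rfl fun e' _ => ?_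
  have h2 : ∀ p ∈ Finset.univ.filter
      (fun p : Fin l → Bool × Bool => (fun d => op (p d).1 (p d).2) = e'),
      (if P (fun d => op (p d).1 (p d).2) then ∏ d, (f (p d).1 * f (p d).2) else 0)
      = (if P e' then ∏ d, (f (p d).1 * f (p d).2) else 0) := by
    intro p hp
    rw [Finset.mem_filter] at hp
    rw [hp.2]
  rw [Finset.sum_congr rfl h2]
  by_cases hP : P e'
  · simp only [if_pos hP]
    rw [Finset.prod_univ_sum]
    have h3 : Fintype.piFinset
        (fun d => Finset.univ.filter fun q : Bool × Bool => op q.1 q.2 = e' d)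
        = Finset.univ.filter
          (fun p : Fin l → Bool × Bool => (fun d => op (p d).1 (p d).2) = e') := by
      ext p
      simp [Fintype.mem_piFinset, funext_iff]
    rw [h3]
  · simp only [if_neg hP, Finset.sum_const_zero]

end Core

open scoped Classical in
lemma or_pair_sum (b : Bool) :
    ∑ q ∈ Finset.univ.filter (fun q : Bool × Bool => (q.1 || q.2) = b),
        (if q.1 then (Polynomial.X : Polynomial ℤ) else 1 - Polynomial.X) *
          (if q.2 then (Polynomial.X : Polynomial ℤ) else 1 - Polynomial.X) =
      if b then 2 * Polynomial.X - Polynomial.X ^ 2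
      else 1 - (2 * Polynomial.X - Polynomial.X ^ 2) := by
  rw [Finset.sum_filter, Fintype.sum_prod_type]
  cases b <;> simp <;> ring

open scoped Classical in
lemma and_pair_sum (b : Bool) :
    ∑ q ∈ Finset.univ.filter (fun q : Bool × Bool => (q.1 && q.2) = b),
        (if q.1 then (Polynomial.X : Polynomial ℤ) else 1 - Polynomial.X) *
          (if q.2 then (Polynomial.X : Polynomial ℤ) else 1 - Polynomial.X) =
      if b then Polynomial.X ^ 2 else 1 - Polynomial.X ^ 2 := by
  rw [Finset.sum_filter, Fintype.sum_prod_type]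
  cases b <;> simp <;> ring

open scoped Classical in
lemma erasurePoly_comp_eq {l : ℕ} (T : Matrix (Fin l) (Fin l) (ZMod 2)) (i : Fin l)
    (s : Polynomial ℤ) :
    (erasurePoly T i).comp s = ∑ e : Fin l → Bool,
      if Kills T i e then s ^ wt e * (1 - s) ^ (l - wt e) else 0 := by
  rw [erasurePoly]
  simp only [Polynomial.sum_comp, Polynomial.mul_comp, Polynomial.pow_comp,
    Polynomial.natCast_comp, Polynomial.X_comp, Polynomial.sub_comp, Polynomial.one_comp]
  simp only [numKilling]
  exact count_sum_form _ s (1 - s)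

open scoped Classical in
lemma erasurePoly_eq {l : ℕ} (T : Matrix (Fin l) (Fin l) (ZMod 2)) (i : Fin l) :
    erasurePoly T i = ∑ e : Fin l → Bool,
      if Kills T i e then
        Polynomial.X ^ wt e * (1 - Polynomial.X) ^ (l - wt e) else 0 := by
  rw [erasurePoly]
  simp only [numKilling]
  exact count_sum_form _ Polynomial.X (1 - Polynomial.X)

set_option maxHeartbeats 2000000 in
open scoped Classical in
theorem erasurePoly_kron_Ttwo {l : ℕ} (T : Matrix (Fin l) (Fin l) (ZMod 2))
    (hT : IsUnit T) (i : Fin l) :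
    erasurePoly (kron Ttwo T) ⟨(i : ℕ), by have := i.isLt; omega⟩ =
        (erasurePoly T i).comp (2 * Polynomial.X - Polynomial.X ^ 2) ∧
      erasurePoly (kron Ttwo T) ⟨l + (i : ℕ), by have := i.isLt; omega⟩ =
        (erasurePoly T i).comp (Polynomial.X ^ 2) := by
  constructor
  · rw [erasurePoly_eq, erasurePoly_comp_eq]
    calc
      ∑ e : Fin (2 * l) → Bool,
          (if Kills (kron Ttwo T) ⟨(i : ℕ), by have := i.isLt; omega⟩ e then
            Polynomial.X ^ wt e * (1 - Polynomial.X) ^ (2 * l - wt e) else 0)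
        = ∑ e : Fin (2 * l) → Bool,
          (if Kills T i (fun d => e (inl d) || e (inr d)) then
            ∏ j, (if e j then (Polynomial.X : Polynomial ℤ) else 1 - Polynomial.X) else 0) := by
          refine Finset.sum_congr rfl fun e _ => ?_
          rw [prod_form]
          exact if_congr (kills_or hT i e) rfl rfl
      _ = ∑ e' : Fin l → Bool, (if Kills T i e' then
            ∏ d, (∑ q ∈ Finset.univ.filter
              (fun q : Bool × Bool => (q.1 || q.2) = e' d),
              (if q.1 then (Polynomial.X : Polynomial ℤ) else 1 - Polynomial.X) *
                (if q.2 then (Polynomial.X : Polynomial ℤ) else 1 - Polynomial.X)) else 0) :=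
          core_sum (Kills T i) (fun a b => a || b)
            (fun b => if b then Polynomial.X else 1 - Polynomial.X)
      _ = ∑ e' : Fin l → Bool, (if Kills T i e' then
            (2 * Polynomial.X - Polynomial.X ^ 2) ^ wt e' *
              (1 - (2 * Polynomial.X - Polynomial.X ^ 2)) ^ (l - wt e') else 0) := by
          refine Finset.sum_congr rfl fun e' _ => ?_
          refine if_congr Iff.rfl ?_ rfl
          rw [← prod_form]
          exact Finset.prod_congr rfl fun d _ => or_pair_sum (e' d)
  · rw [erasurePoly_eq, erasurePoly_comp_eq]
    calc
      ∑ e : Fin (2 * l) → Bool,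
          (if Kills (kron Ttwo T) ⟨l + (i : ℕ), by have := i.isLt; omega⟩ e then
            Polynomial.X ^ wt e * (1 - Polynomial.X) ^ (2 * l - wt e) else 0)
        = ∑ e : Fin (2 * l) → Bool,
          (if Kills T i (fun d => e (inl d) && e (inr d)) then
            ∏ j, (if e j then (Polynomial.X : Polynomial ℤ) else 1 - Polynomial.X) else 0) := by
          refine Finset.sum_congr rfl fun e _ => ?_
          rw [prod_form]
          exact if_congr (kills_and i e) rfl rfl
      _ = ∑ e' : Fin l → Bool, (if Kills T i e' then
            ∏ d, (∑ q ∈ Finset.univ.filter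
              (fun q : Bool × Bool => (q.1 && q.2) = e' d),
              (if q.1 then (Polynomial.X : Polynomial ℤ) else 1 - Polynomial.X) *
                (if q.2 then (Polynomial.X : Polynomial ℤ) else 1 - Polynomial.X)) else 0) :=
          core_sum (Kills T i) (fun a b => a && b)
            (fun b => if b then Polynomial.X else 1 - Polynomial.X)
      _ = ∑ e' : Fin l → Bool, (if Kills T i e' then
            (Polynomial.X ^ 2) ^ wt e' *
              (1 - Polynomial.X ^ 2) ^ (l - wt e') else 0) := by
          refine Finset.sum_congr rfl fun e' _ => ?_
          refine if_congr Iff.rfl ?_ rfl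
          rw [← prod_form]
          exact Finset.prod_congr rfl fun d _ => and_pair_sum (e' d)
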